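/- Let $l$ be a positive odd integer and $n \geq 2$ an integer. With $\lambda = \log(2n^2+l)/\log n$, one has $\prod_{k=1}^n (2k^2+l) > (n!)^{\lambda}$. -/

import Mathlib

open Finset Real

lemma fact_prod (n : ℕ) : ∏ x ∈ Icc 1 n, x = n.factorial := by
  induction n with
  | zero => simp
  | succ m ih => rw [Finset.prod_Icc_succ_top (Nat.le_add_left 1 m), ih, Nat.factorial_succ, mul_comm]

lemma key (l n k : ℕ) (hl : 0 < l) (hn : 2 ≤ n) (hk1 : 1 ≤ k) (hkn : k ≤ n) :
    Real.log (2 * n ^ 2 + l) * Real.log k ≤ Real.log n * Real.log (2 * k ^ 2 + l) := by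
  have hn1 : (1:ℝ) < n := by exact_mod_cast hn
  have hb : 0 < Real.log n := Real.log_pos hn1
  rcases eq_or_lt_of_le hk1 with h1 | h2
  · rw [← h1]; push_cast; rw [Real.log_one, mul_zero]
    apply mul_nonneg hb.le
    apply Real.log_nonneg
    have : (1:ℝ) ≤ l := by exact_mod_cast hl
    nlinarith
  · -- k ≥ 2
    have hk2 : (2:ℕ) ≤ k := h2
    have hkr : (1:ℝ) < k := by exact_mod_cast hk2
    have ha : 0 < Real.log k := Real.log_pos hkr
    have hkn' : (k:ℝ) ≤ n := by exact_mod_cast hkn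
    have hab : Real.log k ≤ Real.log n := Real.log_le_log (by positivity) hkn'
    have hlr : (1:ℝ) ≤ l := by exact_mod_cast hl
    have hk0 : (0:ℝ) < k := by positivity
    have hn0 : (0:ℝ) < n := by positivity
    set a := Real.log k
    set b := Real.log n
    set A := Real.log (2 * (k:ℝ) ^ 2 + l)
    set B := Real.log (2 * (n:ℝ) ^ 2 + l)
    -- B - 2b ≥ 0
    have hB2b : 2 * b ≤ B := by
      have : ((n:ℝ)) ^ 2 ≤ 2 * (n:ℝ) ^ 2 + l := by nlinarith
      have h := Real.log_le_log (by positivity) this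
      rwa [Real.log_pow, Nat.cast_ofNat] at h
    -- A - 2a ≥ B - 2b
    have hAB : B - 2 * b ≤ A - 2 * a := by
      have hmul : (2 * (n:ℝ) ^ 2 + l) * k ^ 2 ≤ (2 * (k:ℝ) ^ 2 + l) * n ^ 2 := by
        have hsq : (k:ℝ)^2 ≤ (n:ℝ)^2 := by nlinarith
        nlinarith [mul_le_mul_of_nonneg_left hsq (by linarith : (0:ℝ) ≤ (l:ℝ))]
      have h := Real.log_le_log (by positivity) hmul
      rw [Real.log_mul (by positivity) (by positivity),
          Real.log_mul (by positivity) (by positivity),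
          Real.log_pow, Real.log_pow, Nat.cast_ofNat] at h
      linarith
    nlinarith [mul_nonneg (sub_nonneg.2 hab) (by linarith : (0:ℝ) ≤ B - 2 * b),
               mul_nonneg hb.le (by linarith : (0:ℝ) ≤ (A - 2*a) - (B - 2*b))]

theorem stmt_9 (l : ℕ) (hl : 0 < l) (hlodd : Odd l) (n : ℕ) (hn : 2 ≤ n) :
    ((∏ k ∈ Finset.Icc 1 n, (2 * k ^ 2 + l) : ℕ) : ℝ)
      > (n.factorial : ℝ) ^ (Real.log (2 * n ^ 2 + l) / Real.log n) := by
  have hn1 : (1:ℝ) < n := by exact_mod_cast hn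
  have hb : 0 < Real.log n := Real.log_pos hn1
  have hlr : (1:ℝ) ≤ l := by exact_mod_cast hl
  have hfact : (0:ℝ) < n.factorial := by exact_mod_cast n.factorial_pos
  have hprodpos : 0 < ∏ k ∈ Finset.Icc 1 n, (2 * k ^ 2 + l) := by
    apply Finset.prod_pos; intro k hk; positivity
  have hprodR : (0:ℝ) < ((∏ k ∈ Finset.Icc 1 n, (2 * k ^ 2 + l) : ℕ) : ℝ) := by
    exact_mod_cast hprodpos
  rw [Real.rpow_def_of_pos hfact, ← Real.exp_log hprodR]
  apply Real.exp_lt_exp.2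
  -- compute logs as sums
  have hlogprod : Real.log ((∏ k ∈ Finset.Icc 1 n, (2 * k ^ 2 + l) : ℕ) : ℝ)
      = ∑ k ∈ Finset.Icc 1 n, Real.log (2 * (k:ℝ) ^ 2 + l) := by
    push_cast
    rw [Real.log_prod]
    intro k hk
    positivity
  have hlogfact : Real.log (n.factorial : ℝ) = ∑ k ∈ Finset.Icc 1 n, Real.log k := by
    rw [← fact_prod n]
    push_cast
    rw [Real.log_prod]
    intro k hk
    simp only [Finset.mem_Icc] at hk
    have : (1:ℝ) ≤ k := by exact_mod_cast hk.1
    positivity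
  rw [hlogprod, hlogfact, mul_comm, div_mul_eq_mul_div, div_lt_iff₀ hb, Finset.mul_sum, Finset.sum_mul]
  apply Finset.sum_lt_sum
  · intro k hk
    simp only [Finset.mem_Icc] at hk
    have := key l n k hl hn hk.1 hk.2
    push_cast at this ⊢
    linarith [this]
  · refine ⟨1, Finset.mem_Icc.2 ⟨le_refl 1, by omega⟩, ?_⟩
    push_cast
    rw [Real.log_one, mul_zero]
    have : (1:ℝ) < 2 * 1 ^ 2 + l := by nlinarith
    have hA : 0 < Real.log (2 * (1:ℝ) ^ 2 + l) := Real.log_pos this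
    nlinarith
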